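/- If R is a CSNC ring, then R is an NCSUC ring; that is, every nil-clean element of R is uniquely strongly clean. -/

import Mathlib

/-- An element `a` of a ring is *clean* if `a = e + u` for some idempotent `e` and unit `u`. -/
def IsCleanElem {R : Type*} [Ring R] (a : R) : Prop :=
  ∃ e u : R, IsIdempotentElem e ∧ IsUnit u ∧ a = e + u

/-- An element `a` of a ring is *strongly nil-clean* if `a = e + q` for some idempotent `e`
and nilpotent `q` with `e * q = q * e`. -/
def IsStronglyNilCleanElem {R : Type*} [Ring R] (a : R) : Prop :=
  ∃ e q : R, IsIdempotentElem e ∧ IsNilpotent q ∧ e * q = q * e ∧ a = e + q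

/-- A ring is a *CSNC ring* if every clean element is strongly nil-clean. -/
def IsCSNCRing (R : Type*) [Ring R] : Prop :=
  ∀ a : R, IsCleanElem a → IsStronglyNilCleanElem a

/-- An element `a` of a ring is *nil-clean* if `a = e + q` for some idempotent `e`
and nilpotent `q`. -/
def IsNilCleanElem {R : Type*} [Ring R] (a : R) : Prop :=
  ∃ e q : R, IsIdempotentElem e ∧ IsNilpotent q ∧ a = e + q


section Aux
variable {R : Type*} [Ring R]

lemma idem_nil_eq_zero {p : R} (hp : IsIdempotentElem p) (hn : IsNilpotent p) : p = 0 := by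
  obtain ⟨n, hn⟩ := hn
  calc p = p ^ (n + 1) := (hp.pow_succ_eq n).symm
    _ = p ^ n * p := pow_succ p n
    _ = 0 := by rw [hn, zero_mul]

lemma unit_snc_idem_eq_one {a e q : R} (ha : IsUnit a)
    (he : IsIdempotentElem e) (hq : IsNilpotent q) (c : e * q = q * e) (hd : a = e + q) :
    e = 1 := by
  obtain ⟨U, hU⟩ := ha
  have hcq : Commute (1 - e) q := ((Commute.one_left q).sub_left c)
  have hxnil : IsNilpotent ((1 - e) * q) := hcq.isNilpotent_mul_left hq
  have hxa : (1 - e) * a = (1 - e) * q := by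
    rw [hd, mul_add, sub_mul, sub_mul, one_mul, one_mul, he.eq, sub_self, zero_add]
  have hcomm : Commute ((1 - e) * q) a := by
    show (1 - e) * q * a = a * ((1 - e) * q)
    rw [hd]
    calc (1 - e) * q * (e + q)
        = (1 - e) * (q * e) + (1 - e) * (q * q) := by noncomm_ring
      _ = ((1 - e) * e) * q + (1 - e) * (q * q) := by rw [← c, ← mul_assoc]
      _ = (1 - e) * (q * q) := by
          rw [sub_mul, one_mul, he.eq, sub_self, zero_mul, zero_add]
      _ = e * ((1 - e) * q) + q * ((1 - e) * q) := by
          have h0 : e * ((1 - e) * q) = 0 := by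
            rw [← mul_assoc, mul_sub, mul_one, he.eq, sub_self, zero_mul]
          rw [h0, zero_add, ← mul_assoc q, ← hcq.eq, mul_assoc]
      _ = (e + q) * ((1 - e) * q) := by rw [add_mul]
  have hcomm' : Commute ((1 - e) * q) (↑U⁻¹ : R) := by
    rw [← hU] at hcomm; exact hcomm.units_inv_right
  have h1e : (1 - e) = ((1 - e) * q) * ↑U⁻¹ := by
    rw [← hxa, ← hU, mul_assoc, Units.mul_inv, mul_one]
  have : IsNilpotent (1 - e) := h1e ▸ hcomm'.isNilpotent_mul_right hxnil
  have h0 : (1 - e) = 0 := idem_nil_eq_zero he.one_sub this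
  have := sub_eq_zero.mp h0
  exact this.symm

lemma csnc_two_nilpotent (h : IsCSNCRing R) : IsNilpotent (2 : R) := by
  obtain ⟨e, q, he, hq, c, hd⟩ :=
    h (-1) ⟨0, -1, IsIdempotentElem.zero, isUnit_one.neg, (zero_add _).symm⟩
  have he1 : e = 1 := unit_snc_idem_eq_one isUnit_one.neg he hq c hd
  rw [he1] at hd
  have hq2 : q = -2 := by
    calc q = -1 + (1 + q) := by abel
      _ = -1 + -1 := by rw [← hd]
      _ = -2 := by norm_num
  rw [hq2] at hq
  simpa using hq.neg

lemma pow_eq_of_snc {e q : R} (he : IsIdempotentElem e) (c : e * q = q * e)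
    {k : ℕ} (hk : 1 ≤ k) (hqk : q ^ k = 0) : (e + q) ^ k = e * (1 + q) ^ k := by
  set a := e + q with ha
  have cae : Commute a e := by
    show a * e = e * a
    rw [ha, add_mul, mul_add, he.eq, c]
  have cae' : Commute a (1 - e) := (Commute.one_right a).sub_right cae
  have cq1e : Commute q (1 - e) := ((Commute.one_left q).sub_left c).symm
  have ce1q : Commute e (1 + q) := (Commute.one_right e).add_right c
  have h1 : a * e = e * (1 + q) := by
    rw [ha, add_mul, mul_add, mul_one, he.eq, c]
  have h2 : a * (1 - e) = q * (1 - e) := by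
    rw [ha, add_mul, mul_sub, mul_one, he.eq, sub_self, zero_add]
  have hek : e ^ k = e := by
    obtain ⟨k, rfl⟩ := Nat.exists_eq_add_of_le hk
    rw [add_comm]; exact he.pow_succ_eq k
  have h1ek : (1 - e) ^ k = 1 - e := by
    obtain ⟨k, rfl⟩ := Nat.exists_eq_add_of_le hk
    rw [add_comm]; exact he.one_sub.pow_succ_eq k
  have key1 : a ^ k * e = e * (1 + q) ^ k := by
    calc a ^ k * e = a ^ k * e ^ k := by rw [hek]
      _ = (a * e) ^ k := (cae.mul_pow k).symm
      _ = (e * (1 + q)) ^ k := by rw [h1]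
      _ = e ^ k * (1 + q) ^ k := ce1q.mul_pow k
      _ = e * (1 + q) ^ k := by rw [hek]
  have key2 : a ^ k * (1 - e) = 0 := by
    calc a ^ k * (1 - e) = a ^ k * (1 - e) ^ k := by rw [h1ek]
      _ = (a * (1 - e)) ^ k := (cae'.mul_pow k).symm
      _ = (q * (1 - e)) ^ k := by rw [h2]
      _ = q ^ k * (1 - e) ^ k := cq1e.mul_pow k
      _ = 0 := by rw [hqk, zero_mul]
  calc a ^ k = a ^ k * e + a ^ k * (1 - e) := by rw [← mul_add]; simp
    _ = e * (1 + q) ^ k := by rw [key1, key2, add_zero]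

lemma snc_unique {e q f r : R}
    (he : IsIdempotentElem e) (hf : IsIdempotentElem f)
    (hq : IsNilpotent q) (hr : IsNilpotent r)
    (ceq : e * q = q * e) (cfr : f * r = r * f)
    (heqfr : e + q = f + r) : e = f := by
  obtain ⟨n, hn⟩ := hq
  obtain ⟨m, hm⟩ := hr
  set k := n + m + 1 with hk
  have hqk : q ^ k = 0 := pow_eq_zero_of_le (by omega) hn
  have hrk : r ^ k = 0 := pow_eq_zero_of_le (by omega) hm
  have k1 : (e + q) ^ k = e * (1 + q) ^ k := pow_eq_of_snc he ceq (by omega) hqk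
  have k2 : (f + r) ^ k = f * (1 + r) ^ k := pow_eq_of_snc hf cfr (by omega) hrk
  obtain ⟨U, hU⟩ : IsUnit ((1 + q) ^ k) := (IsNilpotent.isUnit_one_add ⟨n, hn⟩).pow k
  obtain ⟨V, hV⟩ : IsUnit ((1 + r) ^ k) := (IsNilpotent.isUnit_one_add ⟨m, hm⟩).pow k
  have cu : e * ↑U = ↑U * e := by
    rw [hU]; exact (((Commute.one_right e).add_right ceq).pow_right k).eq
  have cv : f * ↑V = ↑V * f := by
    rw [hV]; exact (((Commute.one_right f).add_right cfr).pow_right k).eq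
  have hEF : e * ↑U = f * ↑V := by
    rw [hU, hV, ← k1, ← k2, heqfr]
  -- e * f = f
  have hff : f = e * ↑U * ↑V⁻¹ := by
    calc f = f * (↑V * ↑V⁻¹) := by rw [V.mul_inv, mul_one]
      _ = f * ↑V * ↑V⁻¹ := by rw [mul_assoc]
      _ = e * ↑U * ↑V⁻¹ := by rw [hEF]
  have ef_f : e * f = f := by
    calc e * f = e * (e * ↑U * ↑V⁻¹) := by rw [← hff]
      _ = (e * e) * ↑U * ↑V⁻¹ := by noncomm_ring
      _ = e * ↑U * ↑V⁻¹ := by rw [he.eq]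
      _ = f := hff.symm
  -- e * f = e
  have hee : e = ↑U⁻¹ * (f * ↑V) := by
    calc e = ↑U⁻¹ * (↑U * e) := by rw [← mul_assoc, U.inv_mul, one_mul]
      _ = ↑U⁻¹ * (f * ↑V) := by rw [← cu, hEF]
  have ef_e : e * f = e := by
    calc e * f = (↑U⁻¹ * (f * ↑V)) * f := by rw [← hee]
      _ = ↑U⁻¹ * (f * (↑V * f)) := by noncomm_ring
      _ = ↑U⁻¹ * (f * (f * ↑V)) := by rw [← cv]
      _ = ↑U⁻¹ * ((f * f) * ↑V) := by noncomm_ring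
      _ = ↑U⁻¹ * (f * ↑V) := by rw [hf.eq]
      _ = e := hee.symm
  rw [← ef_e, ef_f]

lemma snc_of_comm_unit (h : IsCSNCRing R) {a g : R} (hg : IsIdempotentElem g)
    (hu : IsUnit (a - g)) (hc : a * g = g * a) :
    ∃ n1 : R, IsNilpotent n1 ∧ (1 - g) * n1 = n1 * (1 - g) ∧ a = (1 - g) + n1 := by
  have h2 : IsNilpotent (2 : R) := csnc_two_nilpotent h
  obtain ⟨e1, q1, he1, hq1, c1, hd1⟩ :=
    h (a - g) ⟨0, a - g, IsIdempotentElem.zero, hu, (zero_add _).symm⟩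
  have he1' : e1 = 1 := unit_snc_idem_eq_one hu he1 hq1 c1 hd1
  rw [he1'] at hd1
  have hq1' : q1 = a - g - 1 := by
    calc q1 = (1 + q1) - 1 := by abel
      _ = (a - g) - 1 := by rw [← hd1]
  have cgq : g * q1 = q1 * g := by
    rw [hq1', sub_mul, sub_mul, mul_sub, mul_sub, one_mul, mul_one, hc, hg.eq]
  have c2g : Commute (2 : R) g := by show 2 * g = g * 2; rw [two_mul, mul_two]
  have c2q : Commute (2 : R) q1 := by show 2 * q1 = q1 * 2; rw [two_mul, mul_two]
  have h2gnil : IsNilpotent (2 * g) := c2g.isNilpotent_mul_right h2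
  have c2gq : Commute (2 * g) q1 := Commute.mul_left c2q cgq
  have hnnil : IsNilpotent (2 * g + q1) := c2gq.isNilpotent_add h2gnil hq1
  refine ⟨2 * g + q1, by simpa using hnnil, ?_, ?_⟩
  · have cgn : g * (2 * g + q1) = (2 * g + q1) * g := by
      have hgg : g * (2 * g) = 2 * g * g := by
        rw [← mul_assoc, ← c2g.eq]
      rw [mul_add, add_mul, hgg, cgq]
    rw [sub_mul, mul_sub, one_mul, mul_one, cgn]
  · rw [hq1']; noncomm_ring

end Aux
theorem stmt_18 (R : Type*) [Ring R] (h : IsCSNCRing R) :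
    ∀ a : R, IsNilCleanElem a →
      ∃! f : R, IsIdempotentElem f ∧ IsUnit (a - f) ∧ a * f = f * a := by
  intro a ha
  obtain ⟨e, q, he, hq, hd⟩ := ha
  obtain ⟨f, m, hf, hm, cfm, hfm⟩ :=
    h (e + (1 + q)) ⟨e, 1 + q, he, hq.isUnit_one_add, rfl⟩
  have ham : a = f + (m - 1) := by
    calc a = (e + (1 + q)) - 1 := by rw [hd]; abel
      _ = (f + m) - 1 := by rw [hfm]
      _ = f + (m - 1) := by abel
  have hfu : IsUnit (a - f) := by
    have hh : a - f = -(1 - m) := by rw [ham]; abel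
    rw [hh]
    exact hm.isUnit_one_sub.neg
  have hfc : a * f = f * a := by
    rw [ham]
    calc (f + (m - 1)) * f = f * f + m * f - f := by noncomm_ring
      _ = m * f := by rw [hf.eq]; abel
      _ = f * m := cfm.symm
      _ = f * f + f * m - f := by rw [hf.eq]; abel
      _ = f * (f + (m - 1)) := by noncomm_ring
  refine ⟨f, ⟨hf, hfu, hfc⟩, ?_⟩
  rintro g ⟨hg, hgu, hgc⟩
  obtain ⟨n1, hn1, c1, hd1⟩ := snc_of_comm_unit h hg hgu hgc
  obtain ⟨n2, hn2, c2, hd2⟩ := snc_of_comm_unit h hf hfu hfc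
  have key : (1 : R) - g = 1 - f :=
    snc_unique hg.one_sub hf.one_sub hn1 hn2 c1 c2 (by rw [← hd1, ← hd2])
  exact sub_right_inj.mp key
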